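/- Let μ, b, P_n be as in the definition of POPUC, and suppose ζ is a zero of P_n with ζ on the unit circle. If P_n(z) = C·(z − ζ)·K_{n−1}(ζ, z) where K_{n−1}(w, z) = Σ_{j=0}^{n−1} conj(q_j(w))·q_j(z) is the Christoffel–Darboux kernel of the normalized OPUC q_j, then C = ∫ P_n(e^{iθ})/(e^{iθ} − ζ) dμ(θ), and this integral is nonzero. -/

import Mathlib

open Real Complex MeasureTheory Polynomial

theorem stmt_12 (μ : Measure ℝ) [IsFiniteMeasure μ]
    (hsupp : μ (Set.Ico 0 (2 * π))ᶜ = 0)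
    (hinf : ∀ s : Finset ℝ, μ ((↑s : Set ℝ))ᶜ ≠ 0)
    (Q : ℕ → Polynomial ℂ)
    (hmonic : ∀ k, (Q k).Monic) (hdeg : ∀ k, (Q k).natDegree = k)
    (horth : ∀ k m, k ≠ m →
      ∫ θ, (Q k).eval (Complex.exp (θ * Complex.I)) *
        (starRingEnd ℂ) ((Q m).eval (Complex.exp (θ * Complex.I))) ∂μ = 0)
    (q : ℕ → Polynomial ℂ) (hqdeg : ∀ k, (q k).natDegree = k)
    (horthon : ∀ k m,
      ∫ θ, (q k).eval (Complex.exp (θ * Complex.I)) *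
        (starRingEnd ℂ) ((q m).eval (Complex.exp (θ * Complex.I))) ∂μ =
        if k = m then 1 else 0)
    (n : ℕ) (hn : 1 ≤ n) (b : ℂ) (hb : ‖b‖ = 1)
    (P : Polynomial ℂ)
    (hP : P = Polynomial.X * Q (n - 1) -
      Polynomial.C ((starRingEnd ℂ) b) * ((Q (n - 1)).map (starRingEnd ℂ)).reverse)
    (ζ : ℂ) (hζ : ‖ζ‖ = 1) (hPζ : P.eval ζ = 0)
    (c : ℂ)
    (hc : ∀ z : ℂ, P.eval z = c * (z - ζ) *
      ∑ j ∈ Finset.range n, (starRingEnd ℂ) ((q j).eval ζ) * (q j).eval z) :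
    c = (∫ θ, (P /ₘ (Polynomial.X - Polynomial.C ζ)).eval (Complex.exp (θ * Complex.I)) ∂μ) ∧
    (∫ θ, (P /ₘ (Polynomial.X - Polynomial.C ζ)).eval (Complex.exp (θ * Complex.I)) ∂μ) ≠ 0 := by
  -- integrability of polynomial evaluations on the circle
  have hint : ∀ p : Polynomial ℂ,
      Integrable (fun θ : ℝ => p.eval (Complex.exp (θ * Complex.I))) μ := by
    intro p
    have hcont : Continuous fun θ : ℝ => p.eval (Complex.exp (θ * Complex.I)) := by
      exact (Polynomial.continuous p).comp (Complex.continuous_exp.comp (by continuity))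
    obtain ⟨M, hM⟩ := (isCompact_sphere (0:ℂ) 1).exists_bound_of_continuousOn
      (Polynomial.continuous p).continuousOn
    refine (integrable_const M).mono' hcont.aestronglyMeasurable ?_
    refine Filter.Eventually.of_forall (fun θ => ?_)
    have hmem : Complex.exp (θ * Complex.I) ∈ Metric.sphere (0:ℂ) 1 := by
      simp [Complex.norm_exp_ofReal_mul_I]
    simpa using hM _ hmem
  -- q 0 is a constant
  obtain ⟨a, ha⟩ : ∃ a, Polynomial.C a = q 0 :=
    Polynomial.natDegree_eq_zero.mp (hqdeg 0)
  have h00 := horthon 0 0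
  rw [if_pos rfl] at h00
  simp only [← ha, Polynomial.eval_C] at h00
  rw [integral_const] at h00
  have ha0 : a ≠ 0 := by
    intro h
    rw [h] at h00
    simp at h00
  have haμ : ((μ Set.univ).toReal : ℂ) * (a * (starRingEnd ℂ) a) = 1 := by
    simpa [smul_eq_mul, measureReal_def] using h00
  -- ∫ q j = 0 for j ≠ 0
  have hqj : ∀ j, j ≠ 0 →
      (∫ θ, (q j).eval (Complex.exp (θ * Complex.I)) ∂μ) = 0 := by
    intro j hj
    have h := horthon j 0
    rw [if_neg hj] at h
    simp only [← ha, Polynomial.eval_C] at h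
    rw [integral_mul_const] at h
    rcases mul_eq_zero.mp h with h' | h'
    · exact h'
    · exact absurd h' (by simpa using ha0)
  -- ∫ q 0 = μ • a
  have hq0 : (∫ θ, (q 0).eval (Complex.exp (θ * Complex.I)) ∂μ)
      = ((μ Set.univ).toReal : ℂ) * a := by
    simp [← ha, integral_const, smul_eq_mul, measureReal_def]
  -- polynomial identity
  set S : Polynomial ℂ :=
    ∑ j ∈ Finset.range n, Polynomial.C ((starRingEnd ℂ) ((q j).eval ζ)) * q j with hS
  have hPeq : P = (Polynomial.X - Polynomial.C ζ) * (Polynomial.C c * S) := by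
    apply Polynomial.funext
    intro z
    rw [hc z]
    simp [hS, Polynomial.eval_finset_sum]
    ring
  have hdiv : P /ₘ (Polynomial.X - Polynomial.C ζ) = Polynomial.C c * S := by
    rw [hPeq, Polynomial.mul_divByMonic_cancel_left _ (Polynomial.monic_X_sub_C ζ)]
  -- P ≠ 0 via coeff n
  have hPn : P.coeff n = 1 := by
    rw [hP]
    have h1 : (Polynomial.X * Q (n - 1)).coeff n = 1 := by
      have hn1 : n = (n - 1) + 1 := by omega
      rw [hn1, Polynomial.coeff_X_mul]
      have := (hmonic (n-1)).leadingCoeff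
      rwa [Polynomial.leadingCoeff, hdeg (n-1)] at this
    have h2 : (((Q (n - 1)).map (starRingEnd ℂ)).reverse).coeff n = 0 := by
      apply Polynomial.coeff_eq_zero_of_natDegree_lt
      calc ((Q (n - 1)).map (starRingEnd ℂ)).reverse.natDegree
          ≤ ((Q (n - 1)).map (starRingEnd ℂ)).natDegree := Polynomial.reverse_natDegree_le _
        _ ≤ (Q (n - 1)).natDegree := Polynomial.natDegree_map_le
        _ = n - 1 := hdeg _
        _ < n := by omega
    simp [h1, h2]
  have hc0 : c ≠ 0 := by
    intro h
    rw [h] at hPeq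
    simp at hPeq
    rw [hPeq] at hPn
    simp at hPn
  -- compute the integral
  have hintegral : (∫ θ, (P /ₘ (Polynomial.X - Polynomial.C ζ)).eval
      (Complex.exp (θ * Complex.I)) ∂μ) = c := by
    rw [hdiv]
    simp only [Polynomial.eval_mul, Polynomial.eval_C, hS, Polynomial.eval_finset_sum]
    rw [integral_const_mul]
    have hswap : (∫ θ, (∑ j ∈ Finset.range n,
        ((starRingEnd ℂ) ((q j).eval ζ) * (q j).eval (Complex.exp (θ * Complex.I)))) ∂μ)
        = ∑ j ∈ Finset.range n, (starRingEnd ℂ) ((q j).eval ζ) *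
          ∫ θ, (q j).eval (Complex.exp (θ * Complex.I)) ∂μ := by
      rw [integral_finset_sum]
      · exact Finset.sum_congr rfl fun j _ => integral_const_mul _ _
      · exact fun j _ => (hint (q j)).const_mul _
    rw [hswap]
    rw [Finset.sum_eq_single 0]
    · rw [hq0, ← ha]
      simp only [Polynomial.eval_C]
      have : (starRingEnd ℂ) a * (((μ Set.univ).toReal : ℂ) * a) = 1 := by
        rw [← haμ]; ring
      rw [this, mul_one]
    · intro j _ hj
      rw [hqj j hj, mul_zero]
    · intro h
      exact absurd (Finset.mem_range.mpr (by omega)) h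
  exact ⟨hintegral.symm, hintegral ▸ hc0⟩
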